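/- Let L be a crossed $\mathcal{C}$-algebra over (C, P, ∂). The pair of maps (c ↦ c̃, p ↦ φ_p) constitutes a morphism of crossed modules from (C, P, ∂) to (U(L), Aut(L), δ): both maps are group homomorphisms, the square δ ∘ (~) = φ ∘ ∂ commutes, and (ʰc)~ = φ_h applied to c̃ (equivariance with respect to the actions). -/

import Mathlib

/-- A crossed module structure: a group `P` acting on a group `C` (via `ψ : P →* MulAut C`)
together with a homomorphism `δ : C →* P` satisfying equivariance and the Peiffer identity. -/
structure IsCrossedModule {C P : Type*} [Group C] [Group P]
    (ψ : P →* MulAut C) (δ : C →* P) : Prop where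
  equivariance : ∀ (p : P) (c : C), δ (ψ p c) = p * δ c * p⁻¹
  peiffer : ∀ (c c' : C), ψ (δ c) c' = c * c' * c⁻¹

/-- A crossed `P`-algebra over a field `K`: a `P`-graded associative unital `K`-algebra with a
nondegenerate symmetric inner product and a `P`-action, satisfying Turaev's axioms. -/
structure CrossedPAlgebra (K : Type*) [Field K] (P : Type*) [Group P]
    (L : Type*) [Ring L] [Algebra K L] where
  grading : P → Submodule K L
  grading_indep : iSupIndep grading
  grading_supr : (⨆ p, grading p) = ⊤
  mul_mem : ∀ (g h : P), ∀ a ∈ grading g, ∀ b ∈ grading h, a * b ∈ grading (g * h)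
  one_mem : (1 : L) ∈ grading 1
  ρ : L →ₗ[K] L →ₗ[K] K
  ρ_symm : ∀ a b : L, ρ a b = ρ b a
  ρ_graded : ∀ (g h : P), g * h ≠ 1 → ∀ a ∈ grading g, ∀ b ∈ grading h, ρ a b = 0
  ρ_nondeg : ∀ (g : P), ∀ a ∈ grading g, (∀ b ∈ grading g⁻¹, ρ a b = 0) → a = 0
  ρ_mul_assoc : ∀ a b c : L, ρ (a * b) c = ρ a (b * c)
  φ : P →* (L ≃ₐ[K] L)
  φ_grading : ∀ (g h : P), ∀ a ∈ grading h, φ g a ∈ grading (g * h * g⁻¹)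
  φ_ρ : ∀ (g : P) (a b : L), ρ (φ g a) (φ g b) = ρ a b
  φ_fix : ∀ (g : P), ∀ a ∈ grading g, φ g a = a
  φ_comm : ∀ (g h : P), ∀ a ∈ grading g, ∀ b ∈ grading h, (φ h) a * b = b * a

/-- A crossed `𝒞`-algebra over a crossed module `(C, P, δ)` (with action `ψ`): a crossed
`P`-algebra together with distinguished elements `c̃ ∈ L_{δ c}` for `c ∈ C`. -/
structure CrossedAlgebra (K : Type*) [Field K] {C P : Type*} [Group C] [Group P]
    (ψ : P →* MulAut C) (δ : C →* P) (L : Type*) [Ring L] [Algebra K L]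
    extends CrossedPAlgebra K P L where
  tilde : C → L
  tilde_mem : ∀ c : C, tilde c ∈ grading (δ c)
  tilde_one : tilde 1 = 1
  tilde_mul : ∀ c c' : C, tilde (c * c') = tilde c * tilde c'
  φ_tilde : ∀ (h : P) (c : C), φ h (tilde c) = tilde (ψ h c)

/-- in a crossed `𝒞`-algebra `L`, the pair `(c ↦ c̃, p ↦ φ_p)` is a morphism
of crossed modules from `(C, P, δ)` to `(U(L), Aut(L), conjugation)`: tilderisation lifts to a
group homomorphism `T : C →* Lˣ`, the square commutes (`φ_{δ c}` is conjugation by `c̃`), and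
`T` is equivariant: `(ʰc)~ = φ_h(c̃)`. -/
theorem tilde_phi_crossed_module_morphism {K : Type*} [Field K] {C P : Type*} [Group C]
    [Group P] {ψ : P →* MulAut C} {δ : C →* P} (hcm : IsCrossedModule ψ δ)
    {L : Type*} [Ring L] [Algebra K L] (A : CrossedAlgebra K ψ δ L) :
    ∃ T : C →* Lˣ,
      (∀ c : C, (T c : L) = A.tilde c) ∧
      (∀ (c : C) (x : L), A.φ (δ c) x = (T c : L) * x * ((T c)⁻¹ : Lˣ)) ∧
      (∀ (h : P) (c : C), (T (ψ h c) : L) = A.φ h (T c : L)) := by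
  have hinv : ∀ c : C, A.tilde c * A.tilde c⁻¹ = 1 := fun c => by
    rw [← A.tilde_mul, mul_inv_cancel, A.tilde_one]
  have hinv' : ∀ c : C, A.tilde c⁻¹ * A.tilde c = 1 := fun c => by
    rw [← A.tilde_mul, inv_mul_cancel, A.tilde_one]
  refine ⟨{ toFun := fun c => ⟨A.tilde c, A.tilde c⁻¹, hinv c, hinv' c⟩,
            map_one' := by ext; simp [A.tilde_one],
            map_mul' := fun c c' => by ext; simp [A.tilde_mul] },
          fun c => rfl, ?_, fun h c => (A.φ_tilde h c).symm⟩
  intro c x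
  have hx : x ∈ ⨆ p, A.grading p := by rw [A.grading_supr]; trivial
  have main : A.φ (δ c) x * A.tilde c = A.tilde c * x := by
    refine Submodule.iSup_induction (motive := fun y => A.φ (δ c) y * A.tilde c = A.tilde c * y)
      A.grading hx (fun g a ha => A.φ_comm g (δ c) a ha _ (A.tilde_mem c)) (by simp) ?_
    intro a b iha ihb
    rw [map_add, add_mul, iha, ihb, mul_add]
  show A.φ (δ c) x = A.tilde c * x * A.tilde c⁻¹
  calc A.φ (δ c) x = A.φ (δ c) x * (A.tilde c * A.tilde c⁻¹) := by rw [hinv c, mul_one]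
    _ = (A.φ (δ c) x * A.tilde c) * A.tilde c⁻¹ := by rw [mul_assoc]
    _ = A.tilde c * x * A.tilde c⁻¹ := by rw [main]
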